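/- For any linearly ordered type α and finite S ⊆ α, a function g : S → ℤ monotone on S (x ≤ y → g x ≤ g y for x, y ∈ S) extends to a monotone function f : α → ℤ. -/

import Mathlib

theorem stmt_17 (α : Type*) [LinearOrder α] (S : Finset α) (g : α → ℤ)
    (hg : ∀ x ∈ S, ∀ y ∈ S, x ≤ y → g x ≤ g y) :
    ∃ f : α → ℤ, Monotone f ∧ ∀ x ∈ S, f x = g x := by
  rcases S.eq_empty_or_nonempty with rfl | hS
  · exact ⟨fun _ => 0, monotone_const, by simp⟩
  set m : ℤ := (S.image g).min' (hS.image g) with hm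
  have hmle : ∀ s ∈ S, m ≤ g s := fun s hs =>
    Finset.min'_le _ _ (Finset.mem_image_of_mem g hs)
  set f : α → ℤ := fun x => WithBot.unbotD m ((S.filter (· ≤ x)).image g).max with hf
  have key : ∀ x (v : ℤ), ((S.filter (· ≤ x)).image g).max = (v : WithBot ℤ) → m ≤ v := by
    intro x v hv
    obtain ⟨s, hs, hgs⟩ := Finset.mem_image.1 (Finset.mem_of_max hv)
    exact hgs ▸ hmle s (Finset.mem_filter.1 hs).1
  refine ⟨f, ?_, ?_⟩
  · intro x y hxy
    have hsub : (S.filter (· ≤ x)).image g ⊆ (S.filter (· ≤ y)).image g := by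
      apply Finset.image_subset_image
      intro s hs
      rw [Finset.mem_filter] at hs ⊢
      exact ⟨hs.1, hs.2.trans hxy⟩
    have hmax := Finset.max_mono hsub
    simp only [hf]
    cases hx : ((S.filter (· ≤ x)).image g).max with
    | bot =>
      cases hy : ((S.filter (· ≤ y)).image g).max with
      | bot => simp
      | coe v => simpa using key y v hy
    | coe v =>
      cases hy : ((S.filter (· ≤ y)).image g).max with
      | bot =>
        rw [hx, hy] at hmax
        exact absurd hmax (by simp)
      | coe w =>
        rw [hx, hy] at hmax
        simpa using hmax
  · intro x hx
    have hxmem : g x ∈ (S.filter (· ≤ x)).image g :=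
      Finset.mem_image_of_mem g (Finset.mem_filter.2 ⟨hx, le_refl x⟩)
    have hmax : ((S.filter (· ≤ x)).image g).max = (g x : WithBot ℤ) := by
      apply le_antisymm
      · apply Finset.max_le
        intro v hv
        obtain ⟨s, hs, rfl⟩ := Finset.mem_image.1 hv
        rw [Finset.mem_filter] at hs
        exact_mod_cast hg s hs.1 x hx hs.2
      · exact Finset.le_max hxmem
    simp [hf, hmax]
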